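/- Let T > 0. Let α : [0,T] → ℝ be integrable, let β : [0,T] → ℝ be nonnegative and continuous, let u : [0,T] → ℝ be continuous, and let v : [0,T] → ℝ be nonnegative and integrable. If u(s) + ∫₀^s v(t) dt ≤ α(s) + ∫₀^s β(t) u(t) dt for every s ∈ [0,T], then u(s) + ∫₀^s v(t) dt ≤ α(s) + ∫₀^s α(t) β(t) exp(∫_t^s β(r) dr) dt for every s ∈ [0,T]. -/

import Mathlib

open MeasureTheory Set

/-- Modified Gronwall lemma (Lemma 3.1 of [GL17e]): if
`u(s) + ∫₀^s v ≤ α(s) + ∫₀^s β u` on `[0,T]`, then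
`u(s) + ∫₀^s v ≤ α(s) + ∫₀^s α(t) β(t) exp(∫_t^s β) dt`. -/
theorem modified_gronwall
    (T : ℝ) (hT : 0 < T)
    (α β u v : ℝ → ℝ)
    (hα_int : IntegrableOn α (Icc 0 T))
    (hβ_nonneg : ∀ t ∈ Icc (0 : ℝ) T, 0 ≤ β t)
    (hβ_cont : ContinuousOn β (Icc 0 T))
    (hu_cont : ContinuousOn u (Icc 0 T))
    (hv_nonneg : ∀ t ∈ Icc (0 : ℝ) T, 0 ≤ v t)
    (hv_int : IntegrableOn v (Icc 0 T))
    (hineq : ∀ s ∈ Icc (0 : ℝ) T,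
      u s + ∫ t in (0 : ℝ)..s, v t ≤ α s + ∫ t in (0 : ℝ)..s, β t * u t) :
    ∀ s ∈ Icc (0 : ℝ) T,
      u s + ∫ t in (0 : ℝ)..s, v t
        ≤ α s + ∫ t in (0 : ℝ)..s, α t * β t * Real.exp (∫ r in t..s, β r) := by
  intro s hs
  obtain ⟨hs0, hsT⟩ := hs
  set w : ℝ → ℝ := fun t => ∫ x in (0:ℝ)..t, β x * u x with hw_def
  set B : ℝ → ℝ := fun t => ∫ x in (0:ℝ)..t, β x with hB_def
  have hβu_cont : ContinuousOn (fun x => β x * u x) (Icc 0 T) := hβ_cont.mul hu_cont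
  have huIcc : uIcc (0:ℝ) T = Icc 0 T := uIcc_of_le hT.le
  -- interval integrability of β*u and β on [0,t] for t ∈ [0,T]
  have hβu_int : ∀ t ∈ Icc (0:ℝ) T, IntervalIntegrable (fun x => β x * u x) volume 0 t :=
    fun t ht => (hβu_cont.mono (Icc_subset_Icc le_rfl ht.2)).intervalIntegrable_of_Icc ht.1
  have hβ_int : ∀ t ∈ Icc (0:ℝ) T, IntervalIntegrable β volume 0 t :=
    fun t ht => (hβ_cont.mono (Icc_subset_Icc le_rfl ht.2)).intervalIntegrable_of_Icc ht.1
  -- continuity of the primitives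
  have hw_cont : ContinuousOn w (Icc 0 T) := by
    have := intervalIntegral.continuousOn_primitive_interval (μ := volume)
      (f := fun x => β x * u x) (a := 0) (b := T)
      (by rw [huIcc]; exact hβu_cont.integrableOn_Icc)
    rwa [huIcc] at this
  have hB_cont : ContinuousOn B (Icc 0 T) := by
    have := intervalIntegral.continuousOn_primitive_interval (μ := volume)
      (f := β) (a := 0) (b := T) (by rw [huIcc]; exact hβ_cont.integrableOn_Icc)
    rwa [huIcc] at this
  -- the auxiliary function h and its derivative g
  set h : ℝ → ℝ := fun t => w t * Real.exp (-(B t)) with hh_def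
  set g : ℝ → ℝ := fun t => (β t * u t - β t * w t) * Real.exp (-(B t)) with hg_def
  have hsubT : Icc (0:ℝ) s ⊆ Icc 0 T := Icc_subset_Icc le_rfl hsT
  have hderiv : ∀ t ∈ Ioo (0:ℝ) s, HasDerivAt h (g t) t := by
    intro t ht
    have htT : t ∈ Ioo (0:ℝ) T := ⟨ht.1, lt_of_lt_of_le ht.2 hsT⟩
    have hmem : Icc (0:ℝ) T ∈ nhds t := Icc_mem_nhds htT.1 htT.2
    have htIcc : t ∈ Icc (0:ℝ) T := ⟨htT.1.le, htT.2.le⟩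
    have hw_deriv : HasDerivAt w (β t * u t) t := by
      refine intervalIntegral.integral_hasDerivAt_right (hβu_int t htIcc) ?_ ?_
      · exact (hβu_cont.mono Ioo_subset_Icc_self).stronglyMeasurableAtFilter isOpen_Ioo t htT
      · exact hβu_cont.continuousAt hmem
    have hB_deriv : HasDerivAt B (β t) t := by
      refine intervalIntegral.integral_hasDerivAt_right (hβ_int t htIcc) ?_ ?_
      · exact (hβ_cont.mono Ioo_subset_Icc_self).stronglyMeasurableAtFilter isOpen_Ioo t htT
      · exact hβ_cont.continuousAt hmem
    have := hw_deriv.fun_mul ((hB_deriv.neg).exp)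
    refine this.congr_deriv ?_
    simp only [hg_def, Pi.neg_apply]
    ring
  have hexp_cont : ContinuousOn (fun t => Real.exp (-(B t))) (Icc 0 T) :=
    Real.continuous_exp.comp_continuousOn hB_cont.neg
  have hh_cont : ContinuousOn h (Icc 0 T) := hw_cont.mul hexp_cont
  have hg_cont : ContinuousOn g (Icc 0 T) :=
    ((hβ_cont.mul hu_cont).sub (hβ_cont.mul hw_cont)).mul hexp_cont
  have hg_int : IntervalIntegrable g volume 0 s :=
    (hg_cont.mono hsubT).intervalIntegrable_of_Icc hs0
  -- FTC
  have hFTC : ∫ y in (0:ℝ)..s, g y = h s - h 0 :=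
    intervalIntegral.integral_eq_sub_of_hasDeriv_right_of_le hs0 (hh_cont.mono hsubT)
      (fun x hx => (hderiv x hx).hasDerivWithinAt) hg_int
  have hh0 : h 0 = 0 := by simp [hh_def, hw_def]
  -- the comparison integrand
  set A : ℝ → ℝ := fun t => α t * β t * Real.exp (-(B t)) with hA_def
  have hA_intOn : IntegrableOn A (Icc 0 s) := by
    have : IntegrableOn (fun t => α t * (β t * Real.exp (-(B t)))) (Icc 0 s) := by
      refine IntegrableOn.mul_continuousOn (hα_int.mono_set hsubT)
        ((hβ_cont.mul hexp_cont).mono hsubT) isCompact_Icc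
    refine this.congr_fun (fun x _ => by ring) measurableSet_Icc
  have hA_int : IntervalIntegrable A volume 0 s := by
    have : IntegrableOn A (uIcc 0 s) := by rwa [uIcc_of_le hs0]
    exact this.intervalIntegrable
  -- pointwise bound g ≤ A on [0, s]
  have hpt : ∀ x ∈ Icc (0:ℝ) s, g x ≤ A x := by
    intro x hx
    have hxT : x ∈ Icc (0:ℝ) T := hsubT hx
    have hv0 : 0 ≤ ∫ t in (0:ℝ)..x, v t :=
      intervalIntegral.integral_nonneg hx.1
        (fun t ht => hv_nonneg t ⟨ht.1, le_trans ht.2 hxT.2⟩)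
    have hux : u x ≤ α x + w x := by
      have := hineq x hxT
      linarith
    have hb : 0 ≤ β x := hβ_nonneg x hxT
    have hexp : 0 ≤ Real.exp (-(B x)) := (Real.exp_pos _).le
    have : β x * u x - β x * w x ≤ α x * β x := by nlinarith
    calc g x = (β x * u x - β x * w x) * Real.exp (-(B x)) := rfl
      _ ≤ α x * β x * Real.exp (-(B x)) := mul_le_mul_of_nonneg_right this hexp
      _ = A x := rfl
  have hmono : ∫ y in (0:ℝ)..s, g y ≤ ∫ y in (0:ℝ)..s, A y :=
    intervalIntegral.integral_mono_on hs0 hg_int hA_int hpt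
  have hws : w s * Real.exp (-(B s)) ≤ ∫ y in (0:ℝ)..s, A y := by
    have : h s = ∫ y in (0:ℝ)..s, g y := by rw [hFTC, hh0]; ring
    calc w s * Real.exp (-(B s)) = h s := rfl
      _ = ∫ y in (0:ℝ)..s, g y := this
      _ ≤ _ := hmono
  -- multiply by exp (B s)
  have hwfinal : w s ≤ ∫ t in (0:ℝ)..s, α t * β t * Real.exp (∫ r in t..s, β r) := by
    have hmul := mul_le_mul_of_nonneg_left hws (Real.exp_pos (B s)).le
    have hL : Real.exp (B s) * (w s * Real.exp (-(B s))) = w s := by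
      rw [← mul_assoc, mul_comm (Real.exp (B s)), mul_assoc, ← Real.exp_add]
      simp
    have hR : Real.exp (B s) * ∫ y in (0:ℝ)..s, A y
        = ∫ t in (0:ℝ)..s, α t * β t * Real.exp (∫ r in t..s, β r) := by
      rw [← intervalIntegral.integral_const_mul]
      refine intervalIntegral.integral_congr ?_
      intro t ht
      rw [uIcc_of_le hs0] at ht
      have htT : t ∈ Icc (0:ℝ) T := hsubT ht
      have hsub : B s - B t = ∫ r in t..s, β r :=
        intervalIntegral.integral_interval_sub_left (hβ_int s ⟨hs0, hsT⟩) (hβ_int t htT)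
      show Real.exp (B s) * (α t * β t * Real.exp (-(B t))) = α t * β t * Real.exp (∫ r in t..s, β r)
      rw [← hsub, Real.exp_sub, Real.exp_neg]
      have : Real.exp (B t) ≠ 0 := (Real.exp_pos _).ne'
      field_simp
    rw [hL, hR] at hmul
    exact hmul
  have := hineq s ⟨hs0, hsT⟩
  have : u s + ∫ t in (0:ℝ)..s, v t ≤ α s + w s := this
  linarith
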